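/- arXiv:2006.13454 — 2 statements merged into one kernel-verified Lean document; each statement's English description precedes it below -/
import Mathlib

section
/- Let L be a complete nonarchimedean field extension of ℚ_p, m ≥ 1, and f(z) = Σₗ aₗ zˡ with v(aₗ) + m·l → ∞. Define f_q(z) = Σ_{l≥0} aₗ · C(l+q−1, q) · z^{l+q}, where C is the binomial coefficient. Then for all x, z ∈ pᵐℤ_p one has f(z/(1 − x·z)) = Σ_{q=0}^∞ x^q · f_q(z), and the Gauss valuation satisfies v_C(f_q) ≥ v_C(f) + m·q, where v_C(g) = infₗ(v(coefficient of zˡ in g) + m·l). -/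
open Filter Topology

-- finite sum bound in nonarchimedean field
lemma na_sum_le {L : Type*} [NontriviallyNormedField L]
    (hna : IsNonarchimedean fun x : L => ‖x‖) {ι : Type*} (s : Finset ι)
    (f : ι → L) {c : ℝ} (hc : 0 ≤ c) (h : ∀ i ∈ s, ‖f i‖ ≤ c) : ‖∑ i ∈ s, f i‖ ≤ c := by
  classical
  induction s using Finset.induction with
  | empty => simpa using hc
  | insert _ _ hi ih =>
    rw [Finset.sum_insert hi]
    exact le_trans (hna _ _) (max_le (h _ (Finset.mem_insert_self _ _))
      (ih fun i hi' => h i (Finset.mem_insert_of_mem hi')))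

lemma na_summable {L : Type*} [NontriviallyNormedField L] [CompleteSpace L]
    (hna : IsNonarchimedean fun x : L => ‖x‖) {ι : Type*} {f : ι → L}
    (h : Tendsto f cofinite (𝓝 0)) : Summable f := by
  classical
  rw [summable_iff_vanishing_norm]
  intro ε hε
  have hfin : {i | ε/2 ≤ ‖f i‖}.Finite := by
    have := Metric.tendsto_nhds.1 h (ε/2) (by positivity)
    rw [eventually_cofinite] at this
    simpa [dist_zero_right, not_lt] using this
  refine ⟨hfin.toFinset, fun t ht => ?_⟩
  refine lt_of_le_of_lt (na_sum_le hna t f (c := ε/2) (by positivity) fun i hi => ?_) (by linarith)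
  by_contra hcon
  push_neg at hcon
  exact (Finset.disjoint_left.1 ht hi) (hfin.mem_toFinset.2 hcon.le)

lemma na_norm_tsum_le {L : Type*} [NontriviallyNormedField L]
    (hna : IsNonarchimedean fun x : L => ‖x‖) {ι : Type*} {f : ι → L} {c : ℝ}
    (hc : 0 ≤ c) (h : ∀ i, ‖f i‖ ≤ c) : ‖∑' i, f i‖ ≤ c := by
  by_cases hs : Summable f
  · obtain ⟨s, hsum⟩ := hs
    rw [hsum.tsum_eq]
    exact le_of_tendsto ((continuous_norm.tendsto s).comp hsum)
      (Filter.Eventually.of_forall fun t => na_sum_le hna t f hc fun i _ => h i)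
  · rw [tsum_eq_zero_of_not_summable hs]; simpa using hc

lemma na_norm_nat {L : Type*} [NontriviallyNormedField L]
    (hna : IsNonarchimedean fun x : L => ‖x‖) (n : ℕ) : ‖(n : L)‖ ≤ 1 := by
  induction n with
  | zero => simp
  | succ n ih =>
    push_cast
    exact le_trans (hna _ _) (by simpa using ih)

lemma hockey (l n : ℕ) :
    ∑ k ∈ Finset.range (n+1), (l + k - 1).choose k = (l + n).choose n := by
  induction n with
  | zero => simp
  | succ n ih =>
    rw [Finset.sum_range_succ, ih]
    have h1 : l + (n+1) - 1 = l + n := by omega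
    have h2 : l + (n+1) = (l + n) + 1 := by omega
    rw [h1, h2, Nat.choose_succ_succ']

lemma binom_series {L : Type*} [NontriviallyNormedField L] [CompleteSpace L]
    (hna : IsNonarchimedean fun x : L => ‖x‖) {c : L} (hc : ‖c‖ < 1) (l : ℕ) :
    ∑' q : ℕ, ((l + q - 1).choose q : L) * c ^ q = ((1 - c)⁻¹) ^ l := by
  induction l with
  | zero =>
    rw [pow_zero, tsum_eq_single 0 (fun q hq => ?_)]
    · simp
    · rw [Nat.choose_eq_zero_of_lt (show 0 + q - 1 < q by omega)]; simp
  | succ l ih =>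
    have hgn : Summable fun q : ℕ => ‖c ^ q‖ := by
      simpa [norm_pow] using summable_geometric_of_lt_one (norm_nonneg c) hc
    have hfn : Summable fun q : ℕ => ‖((l + q - 1).choose q : L) * c ^ q‖ := by
      refine Summable.of_nonneg_of_le (fun q => norm_nonneg _) (fun q => ?_) hgn
      rw [norm_mul]
      calc ‖((l + q - 1).choose q : L)‖ * ‖c ^ q‖ ≤ 1 * ‖c ^ q‖ := by
            gcongr; exact na_norm_nat hna _
        _ = ‖c ^ q‖ := one_mul _
    rw [pow_succ, ← ih, ← tsum_geometric_of_norm_lt_one hc,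
      tsum_mul_tsum_eq_tsum_sum_antidiagonal_of_summable_norm hfn hgn]
    refine tsum_congr fun n => ?_
    rw [Finset.Nat.sum_antidiagonal_eq_sum_range_succ
      (f := fun i j => ((l + i - 1).choose i : L) * c ^ i * c ^ j), Nat.succ_eq_add_one]
    calc (((l+1) + n - 1).choose n : L) * c ^ n
        = ((l + n).choose n : L) * c ^ n := by rw [show l+1+n-1 = l+n by omega]
      _ = ((∑ k ∈ Finset.range (n+1), (l + k - 1).choose k : ℕ) : L) * c ^ n := by
            rw [hockey]
      _ = ∑ k ∈ Finset.range (n+1), ((l + k - 1).choose k : L) * c ^ n := by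
            push_cast
            rw [Finset.sum_mul]
      _ = ∑ k ∈ Finset.range (n+1), ((l + k - 1).choose k : L) * c ^ k * c ^ (n-k) := by
            refine Finset.sum_congr rfl fun k hk => ?_
            rw [mul_assoc, ← pow_add]
            have := Finset.mem_range.1 hk
            rw [show k + (n - k) = n by omega]

theorem stmt_8 (p : ℕ) [Fact p.Prime] (L : Type*) [NontriviallyNormedField L]
    [CompleteSpace L] (hna : IsNonarchimedean fun x : L => ‖x‖)
    (ι : ℚ_[p] →+* L) (hι : ∀ x, ‖ι x‖ = ‖x‖)
    (m : ℕ) (hm : 1 ≤ m) (a : ℕ → L)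
    (ha : Tendsto (fun l : ℕ => ‖a l‖ * (p : ℝ) ^ (-(m * l : ℤ))) atTop (𝓝 0))
    (x z : ℚ_[p]) (hx : ‖x‖ ≤ (p : ℝ) ^ (-(m : ℤ))) (hz : ‖z‖ ≤ (p : ℝ) ^ (-(m : ℤ))) :
    Summable (fun l : ℕ => a l * ι (z / (1 - x * z)) ^ l) ∧
    (∀ q : ℕ, Summable fun l : ℕ =>
      a l * ((l + q - 1).choose q : L) * ι z ^ (l + q)) ∧
    Summable (fun q : ℕ => ι x ^ q *
      ∑' l : ℕ, a l * ((l + q - 1).choose q : L) * ι z ^ (l + q)) ∧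
    (∑' l : ℕ, a l * ι (z / (1 - x * z)) ^ l
      = ∑' q : ℕ, ι x ^ q *
          ∑' l : ℕ, a l * ((l + q - 1).choose q : L) * ι z ^ (l + q)) ∧
    (∀ q l : ℕ, ‖a l * ((l + q - 1).choose q : L)‖ * (p : ℝ) ^ (-(m * (l + q) : ℤ))
      ≤ (⨆ l' : ℕ, ‖a l'‖ * (p : ℝ) ^ (-(m * l' : ℤ))) * (p : ℝ) ^ (-(m * q : ℤ))) := by
  have hp1 : (1:ℝ) < p := by exact_mod_cast (Fact.out : p.Prime).one_lt
  set r : ℝ := (p:ℝ) ^ (-(m:ℤ)) with hrdef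
  have hr0 : 0 < r := zpow_pos (by linarith) _
  have hr1 : r < 1 := by
    rw [hrdef, zpow_neg, zpow_natCast]
    refine inv_lt_one_of_one_lt₀ (one_lt_pow₀ (by linarith) (by omega))
  have hrl : ∀ k : ℕ, (p:ℝ) ^ (-(m * k : ℤ)) = r ^ k := by
    intro k
    rw [hrdef, ← zpow_natCast ((p:ℝ) ^ (-(m:ℤ))), ← zpow_mul]
    congr 1
    push_cast
    ring
  have hg0 : Tendsto (fun l : ℕ => ‖a l‖ * r ^ l) atTop (𝓝 0) := by
    simpa only [hrl] using ha
  have hbdd : BddAbove (Set.range fun l : ℕ => ‖a l‖ * r ^ l) := hg0.bddAbove_range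
  have hMeq : (⨆ l' : ℕ, ‖a l'‖ * (p:ℝ) ^ (-(m * l' : ℤ))) = ⨆ l' : ℕ, ‖a l'‖ * r ^ l' := by
    congr 1
    funext l'
    rw [hrl]
  set M : ℝ := ⨆ l' : ℕ, ‖a l'‖ * r ^ l' with hMdef
  have hMle : ∀ l : ℕ, ‖a l‖ * r ^ l ≤ M := fun l => le_ciSup hbdd l
  have hM0 : (0:ℝ) ≤ M := le_trans (by positivity) (hMle 0)
  have hz' : ‖ι z‖ ≤ r := by rw [hι]; exact hz
  have hx' : ‖ι x‖ ≤ r := by rw [hι]; exact hx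
  have hxz1 : ‖x * z‖ < 1 := by
    rw [norm_mul]
    calc ‖x‖ * ‖z‖ ≤ r * r :=
          mul_le_mul hx hz (norm_nonneg _) hr0.le
      _ < 1 := by nlinarith
  have hden : ‖(1 : ℚ_[p]) - x * z‖ = 1 := by
    have hle : ‖(1 : ℚ_[p]) - x * z‖ ≤ 1 := by
      have h := Padic.nonarchimedean (1 : ℚ_[p]) (-(x * z))
      rw [← sub_eq_add_neg] at h
      refine le_trans h (max_le (by simp) (by rw [norm_neg]; exact hxz1.le))
    have hge : (1:ℝ) ≤ ‖(1 : ℚ_[p]) - x * z‖ := by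
      by_contra hcon
      push_neg at hcon
      have h2 := Padic.nonarchimedean ((1 : ℚ_[p]) - x * z) (x * z)
      rw [sub_add_cancel, norm_one] at h2
      rcases max_cases ‖(1 : ℚ_[p]) - x * z‖ ‖x * z‖ with ⟨he, _⟩ | ⟨he, _⟩ <;>
        rw [he] at h2 <;> linarith
    linarith
  have hw : ‖ι (z / (1 - x * z))‖ ≤ r := by
    rw [hι, norm_div, hden, div_one]
    exact hz
  have htb : ∀ q l : ℕ, ‖a l * ((l + q - 1).choose q : L) * ι z ^ (l + q)‖
      ≤ (‖a l‖ * r ^ l) * r ^ q := by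
    intro q l
    rw [norm_mul, norm_mul, norm_pow]
    calc ‖a l‖ * ‖((l + q - 1).choose q : L)‖ * ‖ι z‖ ^ (l + q)
        ≤ ‖a l‖ * 1 * r ^ (l + q) := by
          gcongr
          exact na_norm_nat hna _
      _ = (‖a l‖ * r ^ l) * r ^ q := by rw [pow_add]; ring
  have S2 : ∀ q : ℕ, Summable fun l : ℕ =>
      a l * ((l + q - 1).choose q : L) * ι z ^ (l + q) := by
    intro q
    apply na_summable hna
    rw [Nat.cofinite_eq_atTop]
    refine squeeze_zero_norm (htb q) ?_
    simpa using hg0.mul_const (r ^ q)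
  refine ⟨?_, S2, ?_, ?_, ?_⟩
  · apply na_summable hna
    rw [Nat.cofinite_eq_atTop]
    refine squeeze_zero_norm (fun l => ?_) hg0
    rw [norm_mul, norm_pow]
    gcongr
  · apply na_summable hna
    rw [Nat.cofinite_eq_atTop]
    refine squeeze_zero_norm (fun q => ?_)
      (?_ : Tendsto (fun q : ℕ => r ^ q * (M * r ^ q)) atTop (𝓝 0))
    · rw [norm_mul, norm_pow]
      gcongr
      refine na_norm_tsum_le hna (by positivity) fun l => ?_
      refine le_trans (htb q l) ?_
      exact mul_le_mul_of_nonneg_right (hMle l) (by positivity)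
    · have h1 : Tendsto (fun q : ℕ => r ^ q) atTop (𝓝 0) :=
        tendsto_pow_atTop_nhds_zero_of_lt_one hr0.le hr1
      simpa using (h1.mul ((h1.const_mul M)))
  · -- main equality
    set c : L := ι x * ι z with hcdef
    have hc : ‖c‖ < 1 := by
      rw [hcdef, norm_mul]
      calc ‖ι x‖ * ‖ι z‖ ≤ r * r := mul_le_mul hx' hz' (norm_nonneg _) hr0.le
        _ < 1 := by nlinarith
    have hwc : ι (z / (1 - x * z)) = ι z * (1 - c)⁻¹ := by
      rw [map_div₀, map_sub, map_one, map_mul, div_eq_mul_inv]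
    set F : ℕ → ℕ → L := fun l q =>
      ι x ^ q * (a l * ((l + q - 1).choose q : L) * ι z ^ (l + q)) with hFdef
    have hFb : ∀ l q : ℕ, ‖F l q‖ ≤ (‖a l‖ * r ^ l) * r ^ q := by
      intro l q
      rw [hFdef]
      simp only
      rw [norm_mul]
      calc ‖ι x ^ q‖ * ‖a l * ((l + q - 1).choose q : L) * ι z ^ (l + q)‖
          ≤ 1 * ((‖a l‖ * r ^ l) * r ^ q) := by
            gcongr
            · rw [norm_pow]
              exact pow_le_one₀ (norm_nonneg _) (le_trans hx' hr1.le)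
            · exact htb q l
        _ = _ := one_mul _
    have hFsum : Summable (Function.uncurry F) := by
      apply na_summable hna
      rw [Metric.tendsto_nhds]
      intro ε hε
      rw [eventually_cofinite]
      have hA : {l : ℕ | ε ≤ ‖a l‖ * r ^ l}.Finite := by
        have h := Metric.tendsto_nhds.1 hg0 ε hε
        rw [← Nat.cofinite_eq_atTop, eventually_cofinite] at h
        refine h.subset fun l hl => ?_
        simp only [Set.mem_setOf_eq, not_lt] at hl ⊢
        rw [Real.dist_eq, sub_zero]
        exact le_trans hl (le_abs_self _)
      have hB : {q : ℕ | ε ≤ M * r ^ q}.Finite := by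
        have h2 : Tendsto (fun q : ℕ => M * r ^ q) atTop (𝓝 0) := by
          simpa using (tendsto_pow_atTop_nhds_zero_of_lt_one hr0.le hr1).const_mul M
        have h := Metric.tendsto_nhds.1 h2 ε hε
        rw [← Nat.cofinite_eq_atTop, eventually_cofinite] at h
        refine h.subset fun q hq => ?_
        simp only [Set.mem_setOf_eq, not_lt] at hq ⊢
        rw [Real.dist_eq, sub_zero]
        exact le_trans hq (le_abs_self _)
      refine Set.Finite.subset (hA.prod hB) fun lq hlq => ?_
      simp only [Set.mem_setOf_eq, not_lt, dist_zero_right] at hlq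
      have h1 : ε ≤ (‖a lq.1‖ * r ^ lq.1) * r ^ lq.2 :=
        le_trans hlq (hFb lq.1 lq.2)
      have hrq1 : r ^ lq.2 ≤ 1 := pow_le_one₀ hr0.le hr1.le
      constructor
      · simp only [Set.mem_setOf_eq]
        calc ε ≤ (‖a lq.1‖ * r ^ lq.1) * r ^ lq.2 := h1
          _ ≤ (‖a lq.1‖ * r ^ lq.1) * 1 :=
              mul_le_mul_of_nonneg_left hrq1 (by positivity)
          _ = _ := mul_one _
      · simp only [Set.mem_setOf_eq]
        calc ε ≤ (‖a lq.1‖ * r ^ lq.1) * r ^ lq.2 := h1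
          _ ≤ M * r ^ lq.2 := mul_le_mul_of_nonneg_right (hMle _) (by positivity)
    have hFl : ∀ l, Summable (F l) := by
      intro l
      apply na_summable hna
      rw [Nat.cofinite_eq_atTop]
      refine squeeze_zero_norm (hFb l) ?_
      simpa using (tendsto_pow_atTop_nhds_zero_of_lt_one hr0.le hr1).const_mul (‖a l‖ * r ^ l)
    have hFq : ∀ q, Summable fun l => F l q := fun q => (S2 q).mul_left _
    calc ∑' l : ℕ, a l * ι (z / (1 - x * z)) ^ l
        = ∑' l : ℕ, ∑' q : ℕ, F l q := by
          refine tsum_congr fun l => ?_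
          rw [hwc, mul_pow, ← binom_series hna hc l, ← tsum_mul_left, ← tsum_mul_left]
          exact tsum_congr fun q => by rw [hFdef]; simp only [hcdef]; ring
      _ = ∑' q : ℕ, ∑' l : ℕ, F l q := (Summable.tsum_comm' hFsum hFl hFq).symm
      _ = _ := tsum_congr fun q => tsum_mul_left
  · intro q l
    have e1 : (p:ℝ) ^ (-(m * (l + q) : ℤ)) = r ^ l * r ^ q := by
      rw [← pow_add, ← hrl (l + q)]
      congr 2
    have e2 : (p:ℝ) ^ (-(m * q : ℤ)) = r ^ q := hrl q
    rw [e1, e2, hMeq]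
    calc ‖a l * ((l + q - 1).choose q : L)‖ * (r ^ l * r ^ q)
        ≤ ‖a l‖ * (r ^ l * r ^ q) := by
          gcongr
          calc ‖a l * _‖ ≤ ‖a l‖ * ‖((l + q - 1).choose q : L)‖ := norm_mul_le _ _
            _ ≤ ‖a l‖ * 1 := by gcongr; exact na_norm_nat hna _
            _ = ‖a l‖ := mul_one _
      _ = (‖a l‖ * r ^ l) * r ^ q := by ring
      _ ≤ M * r ^ q := mul_le_mul_of_nonneg_right (hMle l) (by positivity)
end

section
/- Let L be a complete nonarchimedean field extension of ℚ_p, m ≥ 1, and f(z) = Σₗ aₗ zˡ with v(aₗ) + m·l → ∞. For s' ∈ pᵐℤ_p and z ∈ pᵐℤ_p one has f((1 + s')·z) = Σ_{q=0}^∞ (s')^q · f_q(z) where f_q(z) = Σ_{l ≥ q} aₗ · C(l, q) · zˡ, and v_C(f_q) ≥ inf_{l ≥ q}(v(aₗ) + m·l), so that v_C(f_q) + m·q → ∞ as q → ∞. -/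
open Filter Topology

set_option maxHeartbeats 1000000 in
theorem stmt_9 (p : ℕ) [Fact p.Prime] (L : Type*) [NontriviallyNormedField L]
    [CompleteSpace L] (hna : IsNonarchimedean fun x : L => ‖x‖)
    (ι : ℚ_[p] →+* L) (hι : ∀ x, ‖ι x‖ = ‖x‖)
    (m : ℕ) (hm : 1 ≤ m) (a : ℕ → L)
    (ha : Tendsto (fun l : ℕ => ‖a l‖ * (p : ℝ) ^ (-(m * l : ℤ))) atTop (𝓝 0))
    (s' z : ℚ_[p]) (hs : ‖s'‖ ≤ (p : ℝ) ^ (-(m : ℤ))) (hz : ‖z‖ ≤ (p : ℝ) ^ (-(m : ℤ))) :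
    Summable (fun l : ℕ => a l * ι ((1 + s') * z) ^ l) ∧
    (∀ q : ℕ, Summable fun j : ℕ =>
      a (j + q) * ((j + q).choose q : L) * ι z ^ (j + q)) ∧
    Summable (fun q : ℕ => ι s' ^ q *
      ∑' j : ℕ, a (j + q) * ((j + q).choose q : L) * ι z ^ (j + q)) ∧
    (∑' l : ℕ, a l * ι ((1 + s') * z) ^ l
      = ∑' q : ℕ, ι s' ^ q *
          ∑' j : ℕ, a (j + q) * ((j + q).choose q : L) * ι z ^ (j + q)) ∧
    (∀ q j : ℕ, ‖a (j + q) * ((j + q).choose q : L)‖ * (p : ℝ) ^ (-(m * (j + q) : ℤ))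
      ≤ ⨆ l : ℕ, ‖a (l + q)‖ * (p : ℝ) ^ (-(m * (l + q) : ℤ))) ∧
    Tendsto (fun q : ℕ =>
      (⨆ j : ℕ, ‖a (j + q) * ((j + q).choose q : L)‖ * (p : ℝ) ^ (-(m * (j + q) : ℤ)))
        * (p : ℝ) ^ (-(m * q : ℤ))) atTop (𝓝 0) := by
  haveI : IsUltrametricDist L :=
    IsUltrametricDist.isUltrametricDist_of_isNonarchimedean_norm hna
  have hp1 : (1:ℝ) < p := by exact_mod_cast (Fact.out : p.Prime).one_lt
  have hp0 : (0:ℝ) < p := lt_trans one_pos hp1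
  set R : ℝ := (p:ℝ) ^ (-(m:ℤ)) with hRdef
  have hR0 : 0 < R := by positivity
  have hR1 : R < 1 := by apply zpow_lt_one_of_neg₀ hp1; omega
  have hRl : ∀ l : ℕ, (p:ℝ) ^ (-((m:ℤ) * (l:ℤ))) = R ^ l := by
    intro l
    rw [hRdef, ← zpow_natCast ((p:ℝ) ^ (-(m:ℤ))) l, ← zpow_mul]; ring_nf
  have hRl' : ∀ l q : ℕ, (p:ℝ) ^ (-((m:ℤ) * ((l:ℤ) + (q:ℤ)))) = R ^ (l + q) := by
    intro l q
    rw [show ((l:ℤ) + (q:ℤ)) = ((l + q : ℕ) : ℤ) by push_cast; ring, hRl]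
  -- basic norm facts
  have hnz : ‖ι z‖ ≤ R := by rw [hι]; exact hz
  have hns : ‖ι s'‖ ≤ R := by rw [hι]; exact hs
  have hnat : ∀ n : ℕ, ‖(n : L)‖ ≤ 1 := by
    intro n
    rw [show ((n:L)) = ι (n:ℚ_[p]) from (map_natCast ι n).symm, hι]
    simpa using Padic.norm_int_le_one (p := p) (n : ℤ)
  have hw : ‖ι ((1 + s') * z)‖ ≤ R := by
    rw [hι, norm_mul]
    have h1 : ‖(1 : ℚ_[p]) + s'‖ ≤ 1 := by
      refine le_trans (Padic.nonarchimedean _ _) (max_le (by simp) ?_)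
      exact le_trans hs hR1.le
    calc ‖(1 : ℚ_[p]) + s'‖ * ‖z‖ ≤ 1 * R := by
          exact mul_le_mul h1 hz (norm_nonneg _) zero_le_one
      _ = R := one_mul R
  -- the basic coefficient sequence
  set M : ℕ → ℝ := fun l => ‖a l‖ * R ^ l with hMdef
  have hM0 : ∀ l, 0 ≤ M l := fun l => mul_nonneg (norm_nonneg _) (pow_nonneg hR0.le _)
  have haM : Tendsto M atTop (𝓝 0) := by simpa only [hRl] using ha
  obtain ⟨C, hC⟩ : ∃ C : ℝ, ∀ l, M l ≤ C := by
    obtain ⟨C, hC⟩ := haM.bddAbove_range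
    exact ⟨C, fun l => hC (Set.mem_range_self l)⟩
  have hC0 : 0 ≤ C := le_trans (hM0 0) (hC 0)
  -- bound on the generic double-series term
  have hgen : ∀ q l : ℕ, ‖a l * (l.choose q : L) * ι z ^ l‖ ≤ M l := by
    intro q l
    rw [norm_mul, norm_mul, norm_pow]
    calc ‖a l‖ * ‖(l.choose q : L)‖ * ‖ι z‖ ^ l
        ≤ ‖a l‖ * 1 * R ^ l := by
          apply mul_le_mul
          · exact mul_le_mul_of_nonneg_left (hnat _) (norm_nonneg _)
          · exact pow_le_pow_left₀ (norm_nonneg _) hnz l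
          · positivity
          · positivity
      _ = M l := by rw [mul_one]
  have key : ∀ q j : ℕ,
      ‖ι s' ^ q * (a (j + q) * ((j + q).choose q : L) * ι z ^ (j + q))‖
        ≤ R ^ q * M (j + q) := by
    intro q j
    rw [norm_mul, norm_pow]
    apply mul_le_mul (pow_le_pow_left₀ (norm_nonneg _) hns q) (hgen q (j + q))
      (norm_nonneg _) (pow_nonneg hR0.le _)
  -- Part 1
  have P1 : Summable (fun l : ℕ => a l * ι ((1 + s') * z) ^ l) := by
    apply NonarchimedeanAddGroup.summable_of_tendsto_cofinite_zero
    rw [Nat.cofinite_eq_atTop, tendsto_zero_iff_norm_tendsto_zero]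
    apply squeeze_zero (fun l => norm_nonneg _) _ haM
    intro l
    rw [norm_mul, norm_pow]
    exact mul_le_mul_of_nonneg_left (pow_le_pow_left₀ (norm_nonneg _) hw l) (norm_nonneg _)
  -- Part 2
  have P2 : ∀ q : ℕ, Summable fun j : ℕ =>
      a (j + q) * ((j + q).choose q : L) * ι z ^ (j + q) := by
    intro q
    apply NonarchimedeanAddGroup.summable_of_tendsto_cofinite_zero
    rw [Nat.cofinite_eq_atTop, tendsto_zero_iff_norm_tendsto_zero]
    apply squeeze_zero (fun j => norm_nonneg _) (fun j => hgen q (j + q))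
    exact haM.comp (tendsto_add_atTop_nat q)
  -- norm bound on the inner sums
  have hT : ∀ q : ℕ,
      ‖∑' j : ℕ, a (j + q) * ((j + q).choose q : L) * ι z ^ (j + q)‖ ≤ C := by
    intro q
    apply IsUltrametricDist.norm_tsum_le_of_forall_le_of_nonneg hC0
    intro j
    exact le_trans (hgen q (j + q)) (hC _)
  have hgeo : Tendsto (fun q : ℕ => C * R ^ q) atTop (𝓝 0) := by
    simpa using (tendsto_pow_atTop_nhds_zero_of_lt_one hR0.le hR1).const_mul C
  -- Part 3
  have P3 : Summable (fun q : ℕ => ι s' ^ q *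
      ∑' j : ℕ, a (j + q) * ((j + q).choose q : L) * ι z ^ (j + q)) := by
    apply NonarchimedeanAddGroup.summable_of_tendsto_cofinite_zero
    rw [Nat.cofinite_eq_atTop, tendsto_zero_iff_norm_tendsto_zero]
    apply squeeze_zero (fun q => norm_nonneg _) _ hgeo
    intro q
    rw [norm_mul, norm_pow, mul_comm C (R ^ q)]
    exact mul_le_mul (pow_le_pow_left₀ (norm_nonneg _) hns q) (hT q)
      (norm_nonneg _) (pow_nonneg hR0.le _)
  -- Part 4 : Fubini
  have P4 : (∑' l : ℕ, a l * ι ((1 + s') * z) ^ l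
      = ∑' q : ℕ, ι s' ^ q *
          ∑' j : ℕ, a (j + q) * ((j + q).choose q : L) * ι z ^ (j + q)) := by
    set F : ℕ × ℕ → L := fun qj =>
      ι s' ^ qj.1 * (a (qj.2 + qj.1) * ((qj.2 + qj.1).choose qj.1 : L) * ι z ^ (qj.2 + qj.1))
      with hFdef
    set G : ℕ × ℕ → L := fun lq =>
      ι s' ^ lq.2 * (a lq.1 * ((lq.1.choose lq.2 : ℕ) : L) * ι z ^ lq.1) with hGdef
    have hFsum : Summable F := by
      apply NonarchimedeanAddGroup.summable_of_tendsto_cofinite_zero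
      rw [Metric.tendsto_nhds]
      intro ε hε
      obtain ⟨Q, hQ⟩ := (Filter.eventually_atTop).mp (hgeo.eventually (gt_mem_nhds hε))
      obtain ⟨N, hN⟩ := (Filter.eventually_atTop).mp (haM.eventually (gt_mem_nhds hε))
      rw [Filter.eventually_cofinite]
      apply Set.Finite.subset ((Set.finite_Iio Q).prod (Set.finite_Iio N))
      rintro ⟨q, j⟩ hqj
      simp only [not_lt, dist_zero_right] at hqj
      by_contra hmem
      simp only [Set.mem_prod, Set.mem_Iio, not_and_or, not_lt] at hmem
      have hFb : ‖F (q, j)‖ ≤ R ^ q * M (j + q) := key q j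
      rcases hmem with hq | hj
      · have : R ^ q * M (j + q) ≤ C * R ^ q := by
          rw [mul_comm C (R ^ q)]
          exact mul_le_mul_of_nonneg_left (le_trans (hC _) le_rfl) (pow_nonneg hR0.le _)
        have h2 : C * R ^ q < ε := hQ q hq
        linarith [hqj.trans (hFb.trans this)]
      · have h1 : R ^ q * M (j + q) ≤ 1 * M (j + q) :=
          mul_le_mul_of_nonneg_right (pow_le_one₀ hR0.le hR1.le) (hM0 _)
        have h2 : M (j + q) < ε := hN (j + q) (le_trans hj (Nat.le_add_right j q))
        have := hqj.trans (hFb.trans h1)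
        rw [one_mul] at this
        linarith
    have he : Function.Injective (fun qj : ℕ × ℕ => ((qj.2 + qj.1, qj.1) : ℕ × ℕ)) := by
      rintro ⟨q, j⟩ ⟨q', j'⟩ h
      simp only [Prod.mk.injEq] at h ⊢
      omega
    have hG0 : ∀ x ∉ Set.range (fun qj : ℕ × ℕ => ((qj.2 + qj.1, qj.1) : ℕ × ℕ)), G x = 0 := by
      rintro ⟨l, q⟩ hx
      have hlq : l < q := by
        by_contra h
        push_neg at h
        refine hx ⟨(q, l - q), ?_⟩
        simp only [Prod.mk.injEq]
        exact ⟨by omega, trivial⟩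
      simp [hGdef, Nat.choose_eq_zero_of_lt hlq]
    have hsupp : Function.support G ⊆
        Set.range (fun qj : ℕ × ℕ => ((qj.2 + qj.1, qj.1) : ℕ × ℕ)) := by
      intro x hx
      by_contra h
      exact hx (hG0 x h)
    have hGe : ∀ qj : ℕ × ℕ,
        G ((fun qj : ℕ × ℕ => ((qj.2 + qj.1, qj.1) : ℕ × ℕ)) qj) = F qj := fun _ => rfl
    have hGsum : Summable G := by
      rw [← he.summable_iff hG0]
      exact hFsum.congr fun qj => (hGe qj).symm
    have hEq1 : ∑' x, G x = ∑' y, F y := by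
      rw [← he.tsum_eq hsupp]
    -- inner sums of G are finite sums
    have hGinner : ∀ l : ℕ, ∀ q ∉ Finset.range (l + 1), G (l, q) = 0 := by
      intro l q hq
      simp only [Finset.mem_range, not_lt] at hq
      simp [hGdef, Nat.choose_eq_zero_of_lt (by omega : l < q)]
    have hGsummable_inner : ∀ l : ℕ, Summable fun q => G (l, q) := fun l =>
      summable_of_ne_finset_zero (hGinner l)
    clear_value F G
    have hFinner : ∀ q : ℕ, Summable fun j : ℕ => F (q, j) := by
      intro q
      simp only [hFdef]
      exact (P2 q).mul_left _
    have hLHS : ∑' l : ℕ, a l * ι ((1 + s') * z) ^ l = ∑' x, G x := by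
      rw [Summable.tsum_prod' hGsum hGsummable_inner]
      · apply tsum_congr
        intro l
        rw [tsum_eq_sum (hGinner l)]
        have hxz : ι ((1 + s') * z) = (ι s' + 1) * ι z := by
          rw [map_mul, map_add, map_one, add_comm]
        rw [hxz, mul_pow, add_pow]
        rw [Finset.sum_mul, Finset.mul_sum]
        apply Finset.sum_congr rfl
        intro q hq
        simp only [hGdef, one_pow, mul_one]
        ring
    have hRHS : ∑' y, F y = ∑' q : ℕ, ι s' ^ q *
        ∑' j : ℕ, a (j + q) * ((j + q).choose q : L) * ι z ^ (j + q) := by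
      rw [Summable.tsum_prod' hFsum hFinner]
      apply tsum_congr
      intro q
      simp only [hFdef]
      exact tsum_mul_left
    rw [hLHS, hEq1, hRHS]
  -- Part 5
  have P5 : ∀ q j : ℕ, ‖a (j + q) * ((j + q).choose q : L)‖ * (p : ℝ) ^ (-(m * (j + q) : ℤ))
      ≤ ⨆ l : ℕ, ‖a (l + q)‖ * (p : ℝ) ^ (-(m * (l + q) : ℤ)) := by
    intro q j
    simp only [hRl']
    have hbdd : BddAbove (Set.range fun l : ℕ => ‖a (l + q)‖ * R ^ (l + q)) := by
      refine ⟨C, ?_⟩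
      rintro x ⟨l, rfl⟩
      exact hC (l + q)
    have h1 : ‖a (j + q) * ((j + q).choose q : L)‖ * R ^ (j + q)
        ≤ ‖a (j + q)‖ * R ^ (j + q) := by
      apply mul_le_mul_of_nonneg_right _ (pow_nonneg hR0.le _)
      rw [norm_mul]
      exact mul_le_of_le_one_right (norm_nonneg _) (hnat _)
    exact le_trans h1 (le_ciSup hbdd j)
  -- Part 6
  have P6 : Tendsto (fun q : ℕ =>
      (⨆ j : ℕ, ‖a (j + q) * ((j + q).choose q : L)‖ * (p : ℝ) ^ (-(m * (j + q) : ℤ)))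
        * (p : ℝ) ^ (-(m * q : ℤ))) atTop (𝓝 0) := by
    simp only [hRl', hRl]
    have hsup_nonneg : ∀ q : ℕ,
        0 ≤ ⨆ j : ℕ, ‖a (j + q) * ((j + q).choose q : L)‖ * R ^ (j + q) := by
      intro q
      exact Real.iSup_nonneg fun j => mul_nonneg (norm_nonneg _) (pow_nonneg hR0.le _)
    have hsup_le : ∀ q : ℕ,
        (⨆ j : ℕ, ‖a (j + q) * ((j + q).choose q : L)‖ * R ^ (j + q)) ≤ C := by
      intro q
      apply Real.iSup_le _ hC0
      intro j
      calc ‖a (j + q) * ((j + q).choose q : L)‖ * R ^ (j + q)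
          ≤ ‖a (j + q)‖ * R ^ (j + q) := by
            apply mul_le_mul_of_nonneg_right _ (pow_nonneg hR0.le _)
            rw [norm_mul]
            exact mul_le_of_le_one_right (norm_nonneg _) (hnat _)
        _ ≤ C := hC (j + q)
    apply squeeze_zero (fun q => mul_nonneg (hsup_nonneg q) (pow_nonneg hR0.le _)) _ hgeo
    intro q
    exact mul_le_mul_of_nonneg_right (hsup_le q) (pow_nonneg hR0.le _)
  exact ⟨P1, P2, P3, P4, P5, P6⟩
end
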